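/- (Theorem 1, kernel mean embedding form.) Let (f, g) be a density pair with weight λ satisfying ∫ ‖φ(x)‖ f(x) dx < ∞ and ∫ K(x,x) λ(x) f(x) dx < ∞, let X_1, …, X_N be i.i.d. random points with density g, set w_i := λ(X_i), and let (u_1, …, u_n; z_1, …, z_n) be a (measurably chosen) proper kernel recombination of (w; X) for K0, i.e. u_j ≥ 0, Σ_j u_j φ0(z_j) = Σ_i w_i φ0(X_i), Σ_j u_j = Σ_i w_i, and Σ_j u_j ‖φ1(z_j)‖ ≤ Σ_i w_i ‖φ1(X_i)‖. Define μ_K(f) := ∫ φ(x) f(x) dx and μ_n := (1/N) Σ_j u_j φ(z_j). Then E[‖μ_K(f) − μ_n‖_{H0×H1}] ≤ 2 (∫ K1(x,x) f(x) dx)^{1/2} + √(C_{K,f,g}/N), where C_{K,f,g} = ∫ K(x,x) λ(x) f(x) dx − ∬ K(x,y) f(x) f(y) dx dy. (The quantity ‖μ_K(f) − μ_n‖ equals the worst-case integration error of the quadrature rule h ↦ (1/N) Σ_j u_j h(z_j) over the unit ball of the RKHS of K, i.e. over functions h(x) = ⟪v, φ(x)⟫ with ‖v‖ ≤ 1.)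 -/

import Mathlib

open MeasureTheory ProbabilityTheory RealInnerProductSpace

noncomputable def prodFeature {d : ℕ} {H0 H1 : Type*}
    [NormedAddCommGroup H0] [InnerProductSpace ℝ H0]
    [NormedAddCommGroup H1] [InnerProductSpace ℝ H1]
    (φ0 : (Fin d → ℝ) → H0) (φ1 : (Fin d → ℝ) → H1) :
    (Fin d → ℝ) → WithLp 2 (H0 × H1) :=
  fun x => (WithLp.equiv 2 (H0 × H1)).symm (φ0 x, φ1 x)

private lemma cs_prob {α : Type*} [MeasurableSpace α] {m : Measure α} [IsProbabilityMeasure m]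
    {h : α → ℝ} (h0 : ∀ x, 0 ≤ h x) (h2 : MemLp h 2 m) :
    ∫ x, h x ∂m ≤ Real.sqrt (∫ x, (h x)^2 ∂m) := by
  have hv := variance_nonneg h m
  rw [variance_eq_sub h2] at hv
  simp only [Pi.pow_apply] at hv
  calc ∫ x, h x ∂m = Real.sqrt ((∫ x, h x ∂m)^2) :=
        (Real.sqrt_sq (integral_nonneg h0)).symm
    _ ≤ _ := Real.sqrt_le_sqrt (by linarith)

private lemma integral_wd {α : Type*} [MeasurableSpace α] {μ : Measure α}
    {g : α → ℝ} (hgm : Measurable g) (hg0 : ∀ x, 0 ≤ g x)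
    {E : Type*} [NormedAddCommGroup E] [NormedSpace ℝ E] (F : α → E) :
    ∫ a, F a ∂(μ.withDensity fun x => ENNReal.ofReal (g x)) = ∫ a, g a • F a ∂μ := by
  rw [show (fun x => ENNReal.ofReal (g x)) = fun x => ((g x).toNNReal : ENNReal) from rfl,
    integral_withDensity_eq_integral_smul hgm.real_toNNReal]
  congr 1; ext a; rw [NNReal.smul_def, Real.coe_toNNReal _ (hg0 a)]

private lemma integrable_wd {α : Type*} [MeasurableSpace α] {μ : Measure α}
    {g : α → ℝ} (hgm : Measurable g) (hg0 : ∀ x, 0 ≤ g x)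
    {E : Type*} [NormedAddCommGroup E] [NormedSpace ℝ E] (F : α → E) :
    Integrable F (μ.withDensity fun x => ENNReal.ofReal (g x)) ↔
      Integrable (fun x => g x • F x) μ := by
  rw [show (fun x => ENNReal.ofReal (g x)) = fun x => ((g x).toNNReal : ENNReal) from rfl,
    integrable_withDensity_iff_integrable_smul hgm.real_toNNReal]
  constructor <;> intro h <;> apply h.congr <;> refine Filter.Eventually.of_forall fun a => ?_ <;>
    simp only [NNReal.smul_def, Real.coe_toNNReal _ (hg0 a)]

private lemma prob_wd {α : Type*} [MeasurableSpace α] {μ : Measure α}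
    {g : α → ℝ} (hgm : Measurable g) (hg0 : ∀ x, 0 ≤ g x)
    (hgi : Integrable g μ) (hg1 : ∫ x, g x ∂μ = 1) :
    IsProbabilityMeasure (μ.withDensity fun x => ENNReal.ofReal (g x)) := by
  constructor
  rw [withDensity_apply _ MeasurableSet.univ, setLIntegral_univ,
    ← ofReal_integral_eq_lintegral_ofReal hgi (Filter.Eventually.of_forall hg0), hg1,
    ENNReal.ofReal_one]

set_option maxHeartbeats 2000000 in
theorem statement6
    {d N n : ℕ} (hN : 0 < N)
    {H0 H1 : Type*} [NormedAddCommGroup H0] [InnerProductSpace ℝ H0] [CompleteSpace H0]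
    [NormedAddCommGroup H1] [InnerProductSpace ℝ H1] [CompleteSpace H1]
    (φ0 : (Fin d → ℝ) → H0) (φ1 : (Fin d → ℝ) → H1)
    (hφ0 : StronglyMeasurable φ0) (hφ1 : StronglyMeasurable φ1)
    (f g lam : (Fin d → ℝ) → ℝ)
    (hfm : Measurable f) (hf0 : ∀ x, 0 ≤ f x) (hf1 : ∫ x, f x = 1)
    (hgm : Measurable g) (hg0 : ∀ x, 0 ≤ g x) (hg1 : ∫ x, g x = 1)
    (hlamm : Measurable lam) (hlam0 : ∀ x, 0 ≤ lam x)
    (hfg : f =ᵐ[volume] fun x => lam x * g x)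
    (hmom1 : Integrable (fun x => ‖prodFeature φ0 φ1 x‖ * f x))
    (hmom2 : Integrable (fun x => ‖prodFeature φ0 φ1 x‖ ^ 2 * lam x * f x))
    (hK1f : Integrable (fun x => ‖φ1 x‖ ^ 2 * f x))
    {Ω : Type*} [MeasureSpace Ω] [IsProbabilityMeasure (ℙ : Measure Ω)]
    (X : Fin N → Ω → (Fin d → ℝ))
    (hXm : ∀ i, Measurable (X i))
    (hXindep : iIndepFun X ℙ)
    (hXdist : ∀ i, Measure.map (X i) ℙ
      = volume.withDensity fun x => ENNReal.ofReal (g x))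
    (u : Ω → Fin n → ℝ) (z : Ω → Fin n → (Fin d → ℝ))
    (hum : ∀ j, Measurable fun ω => u ω j)
    (hzm : ∀ j, Measurable fun ω => z ω j)
    (hu0 : ∀ ω j, 0 ≤ u ω j)
    (hmatch : ∀ ω, ∑ j, u ω j • φ0 (z ω j) = ∑ i, lam (X i ω) • φ0 (X i ω))
    (hmass : ∀ ω, ∑ j, u ω j = ∑ i, lam (X i ω))
    (hdiag : ∀ ω, ∑ j, u ω j * ‖φ1 (z ω j)‖ ≤ ∑ i, lam (X i ω) * ‖φ1 (X i ω)‖) :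
    ∫ ω, ‖(∫ x, f x • prodFeature φ0 φ1 x)
          - (N : ℝ)⁻¹ • (∑ j, u ω j • prodFeature φ0 φ1 (z ω j))‖ ∂ℙ
      ≤ 2 * Real.sqrt (∫ x, ‖φ1 x‖ ^ 2 * f x)
        + Real.sqrt (((∫ x, ‖prodFeature φ0 φ1 x‖ ^ 2 * lam x * f x)
            - ∫ x, ∫ y, ⟪prodFeature φ0 φ1 x, prodFeature φ0 φ1 y⟫ * (f x * f y)) / N) := by
  classical
  set Φ : (Fin d → ℝ) → WithLp 2 (H0 × H1) := prodFeature φ0 φ1 with hΦdef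
  have hNR : (N : ℝ) ≠ 0 := Nat.cast_ne_zero.mpr hN.ne'
  have hΦsm : StronglyMeasurable Φ :=
    (WithLp.prodContinuousLinearEquiv 2 ℝ H0 H1).symm.continuous.comp_stronglyMeasurable
      (hφ0.prodMk hφ1)
  -- integrability of f, g
  have hfi : Integrable f := by
    by_contra h; rw [integral_undef h] at hf1; norm_num at hf1
  have hgi : Integrable g := by
    by_contra h; rw [integral_undef h] at hg1; norm_num at hg1
  set ν : Measure (Fin d → ℝ) := volume.withDensity fun x => ENNReal.ofReal (g x) with hνdef
  set μf : Measure (Fin d → ℝ) := volume.withDensity fun x => ENNReal.ofReal (f x) with hμfdef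
  haveI : IsProbabilityMeasure ν := prob_wd hgm hg0 hgi hg1
  haveI : IsProbabilityMeasure μf := prob_wd hfm hf0 hfi hf1
  set μ : WithLp 2 (H0 × H1) := ∫ x, f x • Φ x with hμdef
  set F : (Fin d → ℝ) → WithLp 2 (H0 × H1) := fun x => lam x • Φ x with hFdef
  have hFsm : StronglyMeasurable F := hlamm.stronglyMeasurable.smul hΦsm
  -- integrable f • Φ
  have hfΦint : Integrable (fun x => f x • Φ x) := by
    refine Integrable.mono' hmom1 (hfm.stronglyMeasurable.smul hΦsm).aestronglyMeasurable
      (Filter.Eventually.of_forall fun x => ?_)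
    rw [norm_smul, Real.norm_eq_abs, abs_of_nonneg (hf0 x), mul_comm]
  have hgFae : (fun x => f x • Φ x) =ᵐ[volume] fun x => g x • F x := by
    filter_upwards [hfg] with x hx
    rw [hFdef]; simp only [smul_smul, hx]; ring_nf
  have hFint : Integrable F ν := (integrable_wd hgm hg0 F).2 (hfΦint.congr hgFae)
  have hEF : ∫ x, F x ∂ν = μ := by
    rw [hνdef, integral_wd hgm hg0 F, hμdef, integral_congr_ae hgFae]
  -- second moment
  have hF2ae : (fun x => ‖Φ x‖ ^ 2 * lam x * f x) =ᵐ[volume] fun x => g x • ‖F x‖ ^ 2 := by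
    filter_upwards [hfg] with x hx
    rw [hFdef]; simp only [norm_smul, Real.norm_eq_abs, abs_of_nonneg (hlam0 x), smul_eq_mul,
      mul_pow, hx]; ring
  have hF2int : Integrable (fun x => ‖F x‖ ^ 2) ν :=
    (integrable_wd hgm hg0 _).2 (hmom2.congr hF2ae)
  have hM2 : ∫ x, ‖F x‖ ^ 2 ∂ν = ∫ x, ‖Φ x‖ ^ 2 * lam x * f x := by
    rw [hνdef, integral_wd hgm hg0 _, ← integral_congr_ae hF2ae]
  have hFmem : MemLp F 2 ν :=
    (memLp_two_iff_integrable_sq_norm hFsm.aestronglyMeasurable).2 hF2int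
  -- centered function
  set G : (Fin d → ℝ) → WithLp 2 (H0 × H1) := fun x => F x - μ with hGdef
  have hGsm : StronglyMeasurable G := hFsm.sub stronglyMeasurable_const
  have hGint : Integrable G ν := hFint.sub (integrable_const μ)
  have hEG : ∫ x, G x ∂ν = 0 := by
    rw [hGdef, integral_sub hFint (integrable_const μ), hEF, integral_const, probReal_univ, one_smul, sub_self]
  have hGmem : MemLp G 2 ν := hFmem.sub (memLp_const μ)
  have hG2int : Integrable (fun x => ‖G x‖ ^ 2) ν :=
    (memLp_two_iff_integrable_sq_norm hGsm.aestronglyMeasurable).1 hGmem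
  set C : ℝ := (∫ x, ‖Φ x‖ ^ 2 * lam x * f x) - ‖μ‖ ^ 2 with hCdef
  have hIG2 : ∫ x, ‖G x‖ ^ 2 ∂ν = C := by
    have hinn : Integrable (fun x => ⟪F x, μ⟫) ν := hFint.inner_const μ
    have h1 : ∀ x, ‖G x‖ ^ 2 = ‖F x‖ ^ 2 - 2 * ⟪F x, μ⟫ + ‖μ‖ ^ 2 := fun x => by
      rw [hGdef]; exact norm_sub_sq_real (F x) μ
    calc ∫ x, ‖G x‖ ^ 2 ∂ν = ∫ x, (‖F x‖ ^ 2 - 2 * ⟪F x, μ⟫ + ‖μ‖ ^ 2) ∂ν := by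
          exact integral_congr_ae (Filter.Eventually.of_forall h1)
      _ = (∫ x, (‖F x‖ ^ 2 - 2 * ⟪F x, μ⟫) ∂ν) + ∫ x, ‖μ‖ ^ 2 ∂ν := by
          exact integral_add (hF2int.sub (hinn.const_mul 2)) (integrable_const _)
      _ = (∫ x, ‖F x‖ ^ 2 ∂ν) - 2 * (∫ x, ⟪F x, μ⟫ ∂ν) + ‖μ‖ ^ 2 := by
          rw [integral_sub hF2int (hinn.const_mul 2), integral_const_mul, integral_const,
            probReal_univ, smul_eq_mul, one_mul]
      _ = C := by
          have : ∫ x, ⟪F x, μ⟫ ∂ν = ‖μ‖ ^ 2 := by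
            have hc : ∀ x, ⟪F x, μ⟫ = ⟪μ, F x⟫ := fun x => real_inner_comm _ _
            simp_rw [hc]
            rw [integral_inner hFint μ, hEF, real_inner_self_eq_norm_sq]
          rw [this, hM2, hCdef]; ring
  have hC0 : 0 ≤ C := hIG2 ▸ integral_nonneg fun x => sq_nonneg _
  -- transfer to Ω : as composed with X i
  have hmapG2 : ∀ i, ∫ ω, ‖G (X i ω)‖ ^ 2 ∂ℙ = C := by
    intro i
    have : ∫ ω, ‖G (X i ω)‖ ^ 2 ∂ℙ = ∫ x, ‖G x‖ ^ 2 ∂ν := by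
      rw [← hXdist i]
      exact (integral_map (hXm i).aemeasurable
        ((hGsm.norm.pow 2).aestronglyMeasurable.mono_ac (by rw [hXdist i]))).symm
    rw [this, hIG2]
  -- random variables Y i = F (X i)
  have hYint : ∀ i, Integrable (fun ω => F (X i ω)) ℙ := fun i =>
    (integrable_map_measure hFsm.aestronglyMeasurable (hXm i).aemeasurable).1
      (by rw [hXdist i]; exact hFint)
  have hYmem : ∀ i, MemLp (fun ω => F (X i ω)) 2 ℙ := fun i =>
    (memLp_map_measure_iff hFsm.aestronglyMeasurable (hXm i).aemeasurable).1
      (by rw [hXdist i]; exact hFmem)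
  have hGX2int : ∀ i, Integrable (fun ω => ‖G (X i ω)‖ ^ 2) ℙ := fun i =>
    (integrable_map_measure (hGsm.norm.pow 2).aestronglyMeasurable (hXm i).aemeasurable).1
      (by rw [hXdist i]; exact hG2int)
  have hinner_int : ∀ i j, Integrable (fun ω => ⟪G (X i ω), G (X j ω)⟫) ℙ := by
    intro i j
    refine Integrable.mono' (((hGX2int i).add (hGX2int j)).div_const 2)
      (((hGsm.comp_measurable (hXm i)).inner (hGsm.comp_measurable (hXm j))).aestronglyMeasurable)
      (Filter.Eventually.of_forall fun ω => ?_)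
    rw [Real.norm_eq_abs]
    calc |⟪G (X i ω), G (X j ω)⟫| ≤ ‖G (X i ω)‖ * ‖G (X j ω)‖ := abs_real_inner_le_norm _ _
      _ ≤ (‖G (X i ω)‖ ^ 2 + ‖G (X j ω)‖ ^ 2) / 2 := by nlinarith [sq_nonneg (‖G (X i ω)‖ - ‖G (X j ω)‖)]
  have hcross : ∀ i j, i ≠ j → ∫ ω, ⟪G (X i ω), G (X j ω)⟫ ∂ℙ = 0 := by
    intro i j hij
    set h2 : (Fin d → ℝ) × (Fin d → ℝ) → ℝ := fun p => ⟪G p.1, G p.2⟫ with hh2def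
    have hh2sm : StronglyMeasurable h2 :=
      (hGsm.comp_measurable measurable_fst).inner (hGsm.comp_measurable measurable_snd)
    have hpair : Measure.map (fun ω => (X i ω, X j ω)) ℙ = ν.prod ν := by
      have h := hXindep.indepFun hij
      rw [indepFun_iff_map_prod_eq_prod_map_map (hXm i).aemeasurable (hXm j).aemeasurable] at h
      rw [h, hXdist i, hXdist j]
    have hprodint : Integrable h2 (ν.prod ν) := by
      rw [← hpair]
      exact (integrable_map_measure hh2sm.aestronglyMeasurable
        ((hXm i).prodMk (hXm j)).aemeasurable).2 (hinner_int i j)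
    calc ∫ ω, ⟪G (X i ω), G (X j ω)⟫ ∂ℙ = ∫ p, h2 p ∂(ν.prod ν) := by
          rw [← hpair]
          exact (integral_map ((hXm i).prodMk (hXm j)).aemeasurable
            hh2sm.aestronglyMeasurable).symm
      _ = ∫ x, ∫ y, ⟪G x, G y⟫ ∂ν ∂ν := integral_prod _ hprodint
      _ = 0 := by
          have hz : ∀ x, ∫ y, ⟪G x, G y⟫ ∂ν = 0 := fun x => by
            rw [integral_inner hGint, hEG, inner_zero_right]
          simp only [hz, integral_zero]
  have hdiagC : ∀ i : Fin N, ∫ ω, ⟪G (X i ω), G (X i ω)⟫ ∂ℙ = C := by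
    intro i
    simp_rw [real_inner_self_eq_norm_sq]
    exact hmapG2 i
  -- the empirical mean S
  set S : Ω → WithLp 2 (H0 × H1) := fun ω => (N : ℝ)⁻¹ • ∑ i, F (X i ω) with hSdef
  have hsumG : ∀ ω, μ - S ω = -((N : ℝ)⁻¹ • ∑ i, G (X i ω)) := by
    intro ω
    have h1 : ∑ i, G (X i ω) = (∑ i, F (X i ω)) - (N : ℝ) • μ := by
      rw [hGdef]
      rw [Finset.sum_sub_distrib, Finset.sum_const, Finset.card_fin,
        ← Nat.cast_smul_eq_nsmul ℝ]
    rw [h1, smul_sub, smul_smul, inv_mul_cancel₀ hNR, one_smul, hSdef, neg_sub]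
  have hvar : ∫ ω, ‖μ - S ω‖ ^ 2 ∂ℙ = C / N := by
    have h1 : ∀ ω, ‖μ - S ω‖ ^ 2 = ((N : ℝ)⁻¹) ^ 2 * ∑ i, ∑ j, ⟪G (X i ω), G (X j ω)⟫ := by
      intro ω
      rw [hsumG ω, norm_neg, norm_smul, Real.norm_eq_abs,
        abs_of_nonneg (inv_nonneg.2 (Nat.cast_nonneg N)), mul_pow,
        ← real_inner_self_eq_norm_sq]
      simp only [sum_inner, inner_sum]
      rw [Finset.sum_comm]
    calc ∫ ω, ‖μ - S ω‖ ^ 2 ∂ℙ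
        = ∫ ω, ((N : ℝ)⁻¹) ^ 2 * ∑ i, ∑ j, ⟪G (X i ω), G (X j ω)⟫ ∂ℙ :=
          integral_congr_ae (Filter.Eventually.of_forall h1)
      _ = ((N : ℝ)⁻¹) ^ 2 * ∫ ω, ∑ i, ∑ j, ⟪G (X i ω), G (X j ω)⟫ ∂ℙ := integral_const_mul _ _
      _ = ((N : ℝ)⁻¹) ^ 2 * ∑ i, ∑ j, ∫ ω, ⟪G (X i ω), G (X j ω)⟫ ∂ℙ := by
          rw [integral_finset_sum _ fun i _ => integrable_finset_sum _ fun j _ => hinner_int i j]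
          congr 1
          exact Finset.sum_congr rfl fun i _ => integral_finset_sum _ fun j _ => hinner_int i j
      _ = ((N : ℝ)⁻¹) ^ 2 * ∑ i : Fin N, C := by
          congr 1
          refine Finset.sum_congr rfl fun i _ => ?_
          rw [Finset.sum_eq_single i (fun j _ hji => hcross i j (Ne.symm hji)) (by simp)]
          exact hdiagC i
      _ = C / N := by
          rw [Finset.sum_const, Finset.card_fin, nsmul_eq_mul]
          field_simp
  have hSmem : MemLp (fun ω => μ - S ω) 2 ℙ := by
    refine (memLp_const μ).sub ?_
    rw [hSdef]
    exact ((memLp_finset_sum Finset.univ fun i _ => hYmem i).const_smul ((N:ℝ)⁻¹) : )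
  have hpart1 : ∫ ω, ‖μ - S ω‖ ∂ℙ ≤ Real.sqrt (C / N) := by
    have h := cs_prob (fun ω => norm_nonneg (μ - S ω)) hSmem.norm
    rwa [hvar] at h
  -- part 2 : the H1 penalty
  set q : (Fin d → ℝ) → ℝ := fun x => lam x * ‖φ1 x‖ with hqdef
  have hqsm : StronglyMeasurable q := hlamm.stronglyMeasurable.mul hφ1.norm
  have hφ1sq_int_f : Integrable (fun x => ‖φ1 x‖ ^ 2) μf :=
    (integrable_wd hfm hf0 _).2 (hK1f.congr (Filter.Eventually.of_forall fun x => by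
      simp [smul_eq_mul, mul_comm]))
  have hφ1mem : MemLp (fun x => ‖φ1 x‖) 2 μf := by
    refine (memLp_two_iff_integrable_sq hφ1.norm.aestronglyMeasurable).2 ?_
    exact hφ1sq_int_f
  have hφ1int_f : Integrable (fun x => ‖φ1 x‖) μf := hφ1mem.integrable one_le_two
  set I1 : ℝ := ∫ x, f x • ‖φ1 x‖ with hI1def
  have hI1 : ∫ x, ‖φ1 x‖ ∂μf = I1 := integral_wd hfm hf0 _
  have hI1b : I1 ≤ Real.sqrt (∫ x, ‖φ1 x‖ ^ 2 * f x) := by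
    have h := cs_prob (fun x => norm_nonneg (φ1 x)) hφ1mem
    rw [hI1] at h
    have h2 : ∫ x, ‖φ1 x‖ ^ 2 ∂μf = ∫ x, ‖φ1 x‖ ^ 2 * f x := by
      rw [hμfdef, integral_wd hfm hf0]
      exact integral_congr_ae (Filter.Eventually.of_forall fun x => by
        simp [smul_eq_mul, mul_comm])
    rwa [h2] at h
  have hfφ1int : Integrable (fun x => f x • ‖φ1 x‖) := (integrable_wd hfm hf0 _).1 hφ1int_f
  have hgq_ae : (fun x => f x • ‖φ1 x‖) =ᵐ[volume] fun x => g x • q x := by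
    filter_upwards [hfg] with x hx
    simp only [smul_eq_mul, hqdef, hx]; ring
  have hqint : Integrable q ν := (integrable_wd hgm hg0 q).2 (hfφ1int.congr hgq_ae)
  have hIq : ∫ x, q x ∂ν = I1 := by
    rw [hνdef, integral_wd hgm hg0 q, ← integral_congr_ae hgq_ae]
  have hqXint : ∀ i, Integrable (fun ω => q (X i ω)) ℙ := fun i =>
    (integrable_map_measure hqsm.aestronglyMeasurable (hXm i).aemeasurable).1
      (by rw [hXdist i]; exact hqint)
  have hqXE : ∀ i, ∫ ω, q (X i ω) ∂ℙ = I1 := by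
    intro i
    rw [← hIq, ← hXdist i]
    exact (integral_map (hXm i).aemeasurable
      (hqsm.aestronglyMeasurable.mono_ac (by rw [hXdist i]))).symm
  set T : Ω → ℝ := fun ω => ∑ i, q (X i ω) with hTdef
  have hTint : Integrable T ℙ := integrable_finset_sum _ fun i _ => hqXint i
  have hET : ∫ ω, T ω ∂ℙ = N * I1 := by
    rw [hTdef]
    rw [integral_finset_sum _ fun i _ => hqXint i]
    simp [hqXE, Finset.sum_const, Finset.card_fin, nsmul_eq_mul]
  -- component linear maps
  set P0 : WithLp 2 (H0 × H1) →ₗ[ℝ] H0 :=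
    (LinearMap.fst ℝ H0 H1).comp (WithLp.linearEquiv 2 ℝ (H0 × H1)).toLinearMap with hL0def
  set P1 : WithLp 2 (H0 × H1) →ₗ[ℝ] H1 :=
    (LinearMap.snd ℝ H0 H1).comp (WithLp.linearEquiv 2 ℝ (H0 × H1)).toLinearMap with hL1def
  -- pointwise bound
  have hptw : ∀ ω, ‖μ - (N : ℝ)⁻¹ • (∑ j, u ω j • Φ (z ω j))‖
      ≤ ‖μ - S ω‖ + (N : ℝ)⁻¹ * (2 * T ω) := by
    intro ω
    set B : WithLp 2 (H0 × H1) := ∑ j, u ω j • Φ (z ω j) with hBdef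
    set A : WithLp 2 (H0 × H1) := ∑ i, F (X i ω) with hAdef
    have htri : ‖μ - (N : ℝ)⁻¹ • B‖ ≤ ‖μ - S ω‖ + ‖S ω - (N : ℝ)⁻¹ • B‖ := by
      have := dist_triangle μ (S ω) ((N : ℝ)⁻¹ • B)
      simpa [dist_eq_norm] using this
    have hS : S ω - (N : ℝ)⁻¹ • B = (N : ℝ)⁻¹ • (A - B) := by
      rw [hSdef, smul_sub]
    have hv1 : (A - B).fst = 0 := by
      have hA : P0 A = ∑ i, lam (X i ω) • φ0 (X i ω) := by
        rw [hAdef, map_sum]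
        exact Finset.sum_congr rfl fun i _ => by rw [hFdef]; simp [_root_.map_smul]; rfl
      have hB : P0 B = ∑ j, u ω j • φ0 (z ω j) := by
        rw [hBdef, map_sum]
        exact Finset.sum_congr rfl fun j _ => by simp [_root_.map_smul]; rfl
      have : P0 (A - B) = 0 := by
        rw [map_sub, hA, hB, hmatch ω, sub_self]
      exact this
    have hnv : ‖A - B‖ = ‖(A - B).snd‖ := by
      rw [WithLp.prod_norm_eq_of_L2, hv1]
      simp [Real.sqrt_sq]
    have hv2 : (A - B).snd = (∑ i, lam (X i ω) • φ1 (X i ω)) - ∑ j, u ω j • φ1 (z ω j) := by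
      have hA : P1 A = ∑ i, lam (X i ω) • φ1 (X i ω) := by
        rw [hAdef, map_sum]
        exact Finset.sum_congr rfl fun i _ => by rw [hFdef]; simp [_root_.map_smul]; rfl
      have hB : P1 B = ∑ j, u ω j • φ1 (z ω j) := by
        rw [hBdef, map_sum]
        exact Finset.sum_congr rfl fun j _ => by simp [_root_.map_smul]; rfl
      have : P1 (A - B) = _ := map_sub P1 A B
      rw [hA, hB] at this
      exact this
    have hnb : ‖A - B‖ ≤ 2 * T ω := by
      rw [hnv, hv2]
      calc ‖(∑ i, lam (X i ω) • φ1 (X i ω)) - ∑ j, u ω j • φ1 (z ω j)‖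
          ≤ ‖∑ i, lam (X i ω) • φ1 (X i ω)‖ + ‖∑ j, u ω j • φ1 (z ω j)‖ := norm_sub_le _ _
        _ ≤ (∑ i, lam (X i ω) * ‖φ1 (X i ω)‖) + ∑ j, u ω j * ‖φ1 (z ω j)‖ := by
            gcongr
            · refine (norm_sum_le _ _).trans ?_
              refine le_of_eq (Finset.sum_congr rfl fun i _ => ?_)
              rw [norm_smul, Real.norm_eq_abs, abs_of_nonneg (hlam0 _)]
            · refine (norm_sum_le _ _).trans ?_
              refine le_of_eq (Finset.sum_congr rfl fun j _ => ?_)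
              rw [norm_smul, Real.norm_eq_abs, abs_of_nonneg (hu0 ω j)]
        _ ≤ (∑ i, lam (X i ω) * ‖φ1 (X i ω)‖) + ∑ i, lam (X i ω) * ‖φ1 (X i ω)‖ := by
            gcongr
            exact hdiag ω
        _ = 2 * T ω := by rw [hTdef, hqdef]; ring
    calc ‖μ - (N : ℝ)⁻¹ • B‖ ≤ ‖μ - S ω‖ + ‖S ω - (N : ℝ)⁻¹ • B‖ := htri
      _ = ‖μ - S ω‖ + (N : ℝ)⁻¹ * ‖A - B‖ := by
          rw [hS, norm_smul, Real.norm_eq_abs, abs_of_nonneg (inv_nonneg.2 (Nat.cast_nonneg N))]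
      _ ≤ ‖μ - S ω‖ + (N : ℝ)⁻¹ * (2 * T ω) :=
          add_le_add_right (mul_le_mul_of_nonneg_left hnb
            (inv_nonneg.2 (Nat.cast_nonneg N))) _
  -- integrability of the bound
  have hSint : Integrable (fun ω => μ - S ω) ℙ := hSmem.integrable one_le_two
  have hbint : Integrable (fun ω => ‖μ - S ω‖ + (N : ℝ)⁻¹ * (2 * T ω)) ℙ :=
    hSint.norm.add (((hTint.const_mul 2).const_mul ((N : ℝ)⁻¹)).congr
      (Filter.Eventually.of_forall fun ω => by ring))
  -- the double integral identity
  have hD : (∫ x, ∫ y, ⟪Φ x, Φ y⟫ * (f x * f y)) = ‖μ‖ ^ 2 := by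
    have hx : ∀ x, (∫ y, ⟪Φ x, Φ y⟫ * (f x * f y)) = ⟪μ, f x • Φ x⟫ := by
      intro x
      have h1 : ∀ y, ⟪Φ x, Φ y⟫ * (f x * f y) = f x * ⟪Φ x, f y • Φ y⟫ := fun y => by
        rw [real_inner_smul_right]; ring
      simp_rw [h1]
      rw [integral_const_mul, integral_inner hfΦint, real_inner_smul_right, real_inner_comm]
    simp_rw [hx]
    rw [integral_inner hfΦint μ, real_inner_self_eq_norm_sq]
  -- assembly
  have hmain : ∫ ω, ‖μ - (N : ℝ)⁻¹ • (∑ j, u ω j • Φ (z ω j))‖ ∂ℙ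
      ≤ Real.sqrt (C / N) + 2 * I1 := by
    calc ∫ ω, ‖μ - (N : ℝ)⁻¹ • (∑ j, u ω j • Φ (z ω j))‖ ∂ℙ
        ≤ ∫ ω, (‖μ - S ω‖ + (N : ℝ)⁻¹ * (2 * T ω)) ∂ℙ :=
          integral_mono_of_nonneg (Filter.Eventually.of_forall fun ω => norm_nonneg _)
            hbint (Filter.Eventually.of_forall hptw)
      _ = (∫ ω, ‖μ - S ω‖ ∂ℙ) + (N : ℝ)⁻¹ * (2 * (N * I1)) := by
          rw [integral_add hSint.norm (((hTint.const_mul 2).const_mul ((N : ℝ)⁻¹)).congr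
            (Filter.Eventually.of_forall fun ω => by ring))]
          congr 1
          rw [← integral_congr_ae (Filter.Eventually.of_forall fun ω =>
            (by ring : (N : ℝ)⁻¹ * (2 * T ω) = (N : ℝ)⁻¹ * (2 * T ω)))]
          rw [show (fun ω => (N : ℝ)⁻¹ * (2 * T ω)) = fun ω => (N : ℝ)⁻¹ * (2 * T ω) from rfl]
          rw [integral_const_mul, integral_const_mul, hET]
      _ ≤ Real.sqrt (C / N) + 2 * I1 := by
          have : (N : ℝ)⁻¹ * (2 * ((N : ℝ) * I1)) = 2 * I1 := by field_simp
          rw [this]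
          exact add_le_add_left hpart1 _
  have hgoalC : ((∫ x, ‖Φ x‖ ^ 2 * lam x * f x)
      - ∫ x, ∫ y, ⟪Φ x, Φ y⟫ * (f x * f y)) / N = C / N := by
    rw [hD, hCdef]
  rw [hgoalC]
  have hs2 : 0 ≤ Real.sqrt (C / N) := Real.sqrt_nonneg _
  linarith [hmain, hI1b]
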